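/- arXiv:1101.2286 — 2 statements merged into one kernel-verified Lean document; each statement's English description precedes it below -/
import Mathlib

section
/- (Cotlar–Stein lemma as used) Let {Q_j}_{j∈ℤ} be bounded self-adjoint operators on L²(ℝᵈ) such that for all j, l, ‖Q_j Q_l‖ ≤ β(j−l)² for some nonnegative summable sequence β. Then the sum Σ_j Q_j converges (strongly on a dense set) to a bounded operator with ‖Σ_j Q_j‖ ≤ Σ_j β(j). -/
open MeasureTheory Filter
open scoped Topology

noncomputable section

set_option linter.unusedSectionVars false
namespace CSAux
variable {H : Type*} [NormedAddCommGroup H] [InnerProductSpace ℂ H] [CompleteSpace H]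

/-- ordered product of the operators along a list of indices -/
def Pl (Q : ℤ → H →L[ℂ] H) : List ℤ → (H →L[ℂ] H)
  | [] => 1
  | a :: L => Q a * Pl Q L

/-- front-pairing bound -/
def vB (β : ℤ → ℝ) : List ℤ → ℝ
  | [] => 1
  | [_] => β 0
  | a :: b :: L => β (a - b) ^ 2 * vB β L

/-- consecutive-differences chain weight -/
def wc (β : ℤ → ℝ) : List ℤ → ℝ
  | [] => 1
  | [_] => 1
  | a :: b :: L => β (a - b) * wc β (b :: L)

variable {β : ℤ → ℝ} {Q : ℤ → H →L[ℂ] H}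

lemma vB_nonneg (hβ0 : ∀ j, 0 ≤ β j) : ∀ L, 0 ≤ vB β L := by
  intro L
  induction L using vB.induct with
  | case1 => simp [vB]
  | case2 a => simpa [vB] using hβ0 0
  | case3 a b L ih => exact mul_nonneg (sq_nonneg _) ih

lemma wc_nonneg (hβ0 : ∀ j, 0 ≤ β j) : ∀ L, 0 ≤ wc β L := by
  intro L
  induction L using wc.induct with
  | case1 => simp [wc]
  | case2 a => simp [wc]
  | case3 a b L ih => exact mul_nonneg (hβ0 _) ih

lemma vB_mul : ∀ (L : List ℤ) (x : ℤ),
    vB β (x :: L) * vB β L = β 0 * (wc β (x :: L)) ^ 2 := by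
  intro L
  induction L with
  | nil => intro x; simp [vB, wc]
  | cons y M ih =>
      intro x
      have : vB β (x :: y :: M) = β (x - y) ^ 2 * vB β M := rfl
      rw [this, show wc β (x :: y :: M) = β (x - y) * wc β (y :: M) from rfl]
      rw [mul_pow, mul_assoc, mul_comm (vB β M) (vB β (y :: M)), ih y]
      ring

-- C*-identity for self-adjoint operators
lemma norm_mul_self (T : H →L[ℂ] H) (h : IsSelfAdjoint T) : ‖T * T‖ = ‖T‖ * ‖T‖ := by
  nth_rewrite 1 [← h.star_eq]
  exact CStarRing.norm_star_mul_self (x := T)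

lemma norm_Q_le (hβ0 : ∀ j, 0 ≤ β j) (hsa : ∀ j, IsSelfAdjoint (Q j))
    (hQ : ∀ j l, ‖Q j * Q l‖ ≤ (β (j - l)) ^ 2) (j : ℤ) : ‖Q j‖ ≤ β 0 := by
  have h1 : ‖Q j‖ ^ 2 ≤ (β 0) ^ 2 := by
    rw [sq, ← norm_mul_self (Q j) (hsa j)]
    simpa using hQ j j
  exact (pow_le_pow_iff_left₀ (norm_nonneg _) (hβ0 0) two_ne_zero).mp h1

lemma norm_Pl_le_vB (hβ0 : ∀ j, 0 ≤ β j) (hsa : ∀ j, IsSelfAdjoint (Q j))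
    (hQ : ∀ j l, ‖Q j * Q l‖ ≤ (β (j - l)) ^ 2) : ∀ L, ‖Pl Q L‖ ≤ vB β L := by
  intro L
  induction L using vB.induct with
  | case1 =>
      show ‖(ContinuousLinearMap.id ℂ H)‖ ≤ 1
      exact ContinuousLinearMap.norm_id_le
  | case2 a =>
      show ‖Q a * 1‖ ≤ β 0
      rw [mul_one]; exact norm_Q_le hβ0 hsa hQ a
  | case3 a b L ih =>
      show ‖Q a * (Q b * Pl Q L)‖ ≤ β (a - b) ^ 2 * vB β L
      rw [← mul_assoc]
      exact le_trans (norm_mul_le _ _)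
        (mul_le_mul (hQ a b) ih (norm_nonneg _) (sq_nonneg _))


/-- key geometric-mean bound for products over nonempty lists -/
lemma norm_Pl_le (hβ0 : ∀ j, 0 ≤ β j) (hsa : ∀ j, IsSelfAdjoint (Q j))
    (hQ : ∀ j l, ‖Q j * Q l‖ ≤ (β (j - l)) ^ 2) (x : ℤ) (L : List ℤ) :
    ‖Pl Q (x :: L)‖ ≤ β 0 * wc β (x :: L) := by
  have h1 : ‖Pl Q (x :: L)‖ ≤ vB β (x :: L) := norm_Pl_le_vB hβ0 hsa hQ _
  have h2 : ‖Pl Q (x :: L)‖ ≤ β 0 * vB β L := by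
    calc ‖Q x * Pl Q L‖ ≤ ‖Q x‖ * ‖Pl Q L‖ := norm_mul_le _ _
    _ ≤ β 0 * vB β L :=
        mul_le_mul (norm_Q_le hβ0 hsa hQ x) (norm_Pl_le_vB hβ0 hsa hQ L)
          (norm_nonneg _) (hβ0 0)
  have hsq : ‖Pl Q (x :: L)‖ ^ 2 ≤ (β 0 * wc β (x :: L)) ^ 2 := by
    calc ‖Pl Q (x :: L)‖ ^ 2 = ‖Pl Q (x :: L)‖ * ‖Pl Q (x :: L)‖ := sq _
    _ ≤ vB β (x :: L) * (β 0 * vB β L) :=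
        mul_le_mul h1 h2 (norm_nonneg _) (vB_nonneg hβ0 _)
    _ = β 0 * (vB β (x :: L) * vB β L) := by ring
    _ = β 0 * (β 0 * wc β (x :: L) ^ 2) := by rw [vB_mul]
    _ = (β 0 * wc β (x :: L)) ^ 2 := by ring
  exact (pow_le_pow_iff_left₀ (norm_nonneg _) (mul_nonneg (hβ0 0) (wc_nonneg hβ0 _))
    two_ne_zero).mp hsq


/-- splitting off the first coordinate of a sum over tuples -/
lemma sum_piFinset_succ {M : Type*} [AddCommMonoid M] (F : Finset ℤ) (m : ℕ)
    (g : (Fin (m + 1) → ℤ) → M) :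
    ∑ f ∈ Fintype.piFinset (fun _ : Fin (m + 1) => F), g f
      = ∑ x ∈ F, ∑ h ∈ Fintype.piFinset (fun _ : Fin m => F), g (Fin.cons x h) := by
  have key : ∑ f ∈ Fintype.piFinset (fun _ : Fin (m + 1) => F), g f
      = ∑ p ∈ F ×ˢ Fintype.piFinset (fun _ : Fin m => F), g (Fin.cons p.1 p.2) := by
    refine Finset.sum_nbij' (fun f => (f 0, Fin.tail f)) (fun p => Fin.cons p.1 p.2)
      ?_ ?_ ?_ ?_ ?_
    · intro f hf
      rw [Fintype.mem_piFinset] at hf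
      exact Finset.mk_mem_product (hf 0) (Fintype.mem_piFinset.mpr fun i => hf i.succ)
    · intro p hp
      rw [Finset.mem_product] at hp
      rw [Fintype.mem_piFinset]
      intro i
      refine Fin.cases ?_ ?_ i
      · simpa using hp.1
      · intro i; simpa using Fintype.mem_piFinset.mp hp.2 i
    · intro f _; exact Fin.cons_self_tail f
    · intro p _; simp [Fin.tail_cons]
    · intro f _; rw [Fin.cons_self_tail f]
  rw [key, Finset.sum_product]


lemma ofFn_cons {m : ℕ} (x : ℤ) (h : Fin m → ℤ) :
    List.ofFn (Fin.cons x h : Fin (m + 1) → ℤ) = x :: List.ofFn h := by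
  rw [List.ofFn_succ]
  simp [Fin.cons_zero, Fin.cons_succ]

/-- expansion of powers of the sum into ordered products over tuples -/
lemma pow_eq_sum (F : Finset ℤ) : ∀ m : ℕ,
    (∑ j ∈ F, Q j) ^ m
      = ∑ f ∈ Fintype.piFinset (fun _ : Fin m => F), Pl Q (List.ofFn f) := by
  intro m
  induction m with
  | zero =>
      have h1 : Fintype.piFinset (fun _ : Fin 0 => F) = {(fun i => i.elim0 : Fin 0 → ℤ)} := by
        apply Finset.eq_singleton_iff_unique_mem.mpr
        constructor
        · rw [Fintype.mem_piFinset]; intro i; exact i.elim0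
        · intro f _; funext i; exact i.elim0
      rw [h1, Finset.sum_singleton, pow_zero]
      rfl
  | succ m ih =>
      rw [pow_succ', ih, sum_piFinset_succ F m (fun f => Pl Q (List.ofFn f)),
        Finset.sum_mul]
      refine Finset.sum_congr rfl fun x _ => ?_
      rw [Finset.mul_sum]
      refine Finset.sum_congr rfl fun h _ => ?_
      rw [ofFn_cons]
      rfl


lemma sum_beta_le (hβ0 : ∀ j, 0 ≤ β j) (hβs : Summable β) (F : Finset ℤ) (j : ℤ) :
    ∑ x ∈ F, β (x - j) ≤ ∑' i, β i := by
  have hs : Summable (fun x => β (x - j)) := by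
    have := (Equiv.subRight j).summable_iff (f := β)
    exact this.mpr hβs
  calc ∑ x ∈ F, β (x - j) ≤ ∑' x, β (x - j) :=
        Summable.sum_le_tsum F (fun i _ => hβ0 _) hs
  _ = ∑' i, β i := (Equiv.subRight j).tsum_eq β

lemma wc_cons_ofFn {m : ℕ} (x : ℤ) (h : Fin (m + 1) → ℤ) :
    wc β (x :: List.ofFn h) = β (x - h 0) * wc β (List.ofFn h) := by
  rw [List.ofFn_succ]
  rfl

lemma wc_sum_le (hβ0 : ∀ j, 0 ≤ β j) (hβs : Summable β) (F : Finset ℤ) : ∀ m : ℕ,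
    ∑ f ∈ Fintype.piFinset (fun _ : Fin (m + 1) => F), wc β (List.ofFn f)
      ≤ (F.card : ℝ) * (∑' i, β i) ^ m := by
  intro m
  induction m with
  | zero =>
      rw [sum_piFinset_succ F 0 (fun f => wc β (List.ofFn f))]
      simp only [pow_zero, mul_one]
      have : ∀ x : ℤ, ∀ h ∈ Fintype.piFinset (fun _ : Fin 0 => F),
          wc β (List.ofFn (Fin.cons x h)) = 1 := by
        intro x h _
        rw [ofFn_cons]
        simp [List.ofFn_zero, wc]
      calc ∑ x ∈ F, ∑ h ∈ Fintype.piFinset (fun _ : Fin 0 => F),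
            wc β (List.ofFn (Fin.cons x h))
          ≤ ∑ x ∈ F, 1 := by
            refine Finset.sum_le_sum fun x _ => ?_
            rw [Finset.sum_congr rfl (this x), Finset.sum_const, nsmul_eq_mul, mul_one]
            have h1 : Fintype.piFinset (fun _ : Fin 0 => F) = {(fun i => i.elim0 : Fin 0 → ℤ)} := by
              apply Finset.eq_singleton_iff_unique_mem.mpr
              refine ⟨by rw [Fintype.mem_piFinset]; intro i; exact i.elim0,
                fun f _ => funext fun i => i.elim0⟩
            rw [h1]; simp
      _ = (F.card : ℝ) := by simp
  | succ m ih =>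
      rw [sum_piFinset_succ F (m + 1) (fun f => wc β (List.ofFn f))]
      have hA0 : 0 ≤ ∑' i, β i := tsum_nonneg hβ0
      calc ∑ x ∈ F, ∑ h ∈ Fintype.piFinset (fun _ : Fin (m + 1) => F),
            wc β (List.ofFn (Fin.cons x h))
          = ∑ h ∈ Fintype.piFinset (fun _ : Fin (m + 1) => F),
              (∑ x ∈ F, β (x - h 0)) * wc β (List.ofFn h) := by
            rw [Finset.sum_comm]
            refine Finset.sum_congr rfl fun h _ => ?_
            rw [Finset.sum_mul]
            refine Finset.sum_congr rfl fun x _ => ?_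
            rw [ofFn_cons, wc_cons_ofFn]
      _ ≤ ∑ h ∈ Fintype.piFinset (fun _ : Fin (m + 1) => F),
              (∑' i, β i) * wc β (List.ofFn h) := by
            refine Finset.sum_le_sum fun h _ => ?_
            exact mul_le_mul_of_nonneg_right (sum_beta_le hβ0 hβs F (h 0)) (wc_nonneg hβ0 _)
      _ = (∑' i, β i) * ∑ h ∈ Fintype.piFinset (fun _ : Fin (m + 1) => F),
              wc β (List.ofFn h) := by rw [Finset.mul_sum]
      _ ≤ (∑' i, β i) * ((F.card : ℝ) * (∑' i, β i) ^ m) :=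
            mul_le_mul_of_nonneg_left ih hA0
      _ = (F.card : ℝ) * (∑' i, β i) ^ (m + 1) := by ring


lemma pow_norm_le (hβ0 : ∀ j, 0 ≤ β j) (hβs : Summable β)
    (hsa : ∀ j, IsSelfAdjoint (Q j)) (hQ : ∀ j l, ‖Q j * Q l‖ ≤ (β (j - l)) ^ 2)
    (F : Finset ℤ) (m : ℕ) :
    ‖(∑ j ∈ F, Q j) ^ (m + 1)‖ ≤ β 0 * ((F.card : ℝ) * (∑' i, β i) ^ m) := by
  rw [pow_eq_sum F (m + 1)]
  calc ‖∑ f ∈ Fintype.piFinset (fun _ : Fin (m + 1) => F), Pl Q (List.ofFn f)‖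
      ≤ ∑ f ∈ Fintype.piFinset (fun _ : Fin (m + 1) => F), ‖Pl Q (List.ofFn f)‖ :=
        norm_sum_le _ _
  _ ≤ ∑ f ∈ Fintype.piFinset (fun _ : Fin (m + 1) => F), β 0 * wc β (List.ofFn f) := by
        refine Finset.sum_le_sum fun f _ => ?_
        rw [List.ofFn_succ]
        exact norm_Pl_le hβ0 hsa hQ _ _
  _ = β 0 * ∑ f ∈ Fintype.piFinset (fun _ : Fin (m + 1) => F), wc β (List.ofFn f) := by
        rw [Finset.mul_sum]
  _ ≤ β 0 * ((F.card : ℝ) * (∑' i, β i) ^ m) :=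
        mul_le_mul_of_nonneg_left (wc_sum_le hβ0 hβs F m) (hβ0 0)

lemma norm_pow_two_pow (T : H →L[ℂ] H) (h : IsSelfAdjoint T) (k : ℕ) :
    ‖T‖ ^ (2 ^ k) = ‖T ^ (2 ^ k)‖ := by
  induction k with
  | zero => simp
  | succ k ih =>
      have h2 : T ^ (2 ^ (k + 1)) = T ^ (2 ^ k) * T ^ (2 ^ k) := by
        rw [← pow_add, ← two_mul, ← pow_succ']
      rw [h2, norm_mul_self _ (h.pow _), ← ih, ← pow_add, ← two_mul, ← pow_succ']

/-- the finite Cotlar–Stein bound -/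
lemma finite_CS (hβ0 : ∀ j, 0 ≤ β j) (hβs : Summable β)
    (hsa : ∀ j, IsSelfAdjoint (Q j)) (hQ : ∀ j l, ‖Q j * Q l‖ ≤ (β (j - l)) ^ 2)
    (F : Finset ℤ) : ‖∑ j ∈ F, Q j‖ ≤ ∑' i, β i := by
  set A := ∑' i, β i with hA
  set T := ∑ j ∈ F, Q j with hT
  have hA0 : 0 ≤ A := tsum_nonneg hβ0
  have hβ0A : β 0 ≤ A := Summable.le_tsum hβs 0 (fun j _ => hβ0 j)
  have hTsa : IsSelfAdjoint T := by
    have : star T = T := by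
      rw [hT, star_sum]
      exact Finset.sum_congr rfl fun j _ => (hsa j).star_eq
    exact this
  set c := β 0 * (F.card : ℝ) with hc
  have hc0 : 0 ≤ c := mul_nonneg (hβ0 0) (Nat.cast_nonneg _)
  have hk : ∀ k : ℕ, ‖T‖ ^ (2 ^ k) ≤ c * A ^ (2 ^ k - 1) := by
    intro k
    have h1 : 2 ^ k = (2 ^ k - 1) + 1 := (Nat.sub_add_cancel Nat.one_le_two_pow).symm
    rw [norm_pow_two_pow T hTsa, h1]
    calc ‖T ^ ((2 ^ k - 1) + 1)‖ ≤ β 0 * ((F.card : ℝ) * A ^ (2 ^ k - 1)) :=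
          pow_norm_le hβ0 hβs hsa hQ F _
    _ = c * A ^ (2 ^ k - 1) := by rw [hc]; ring
  rcases eq_or_lt_of_le hA0 with hA0' | hApos
  · -- A = 0
    have hβ00 : β 0 = 0 := le_antisymm (hβ0A.trans hA0'.symm.le) (hβ0 0)
    have := hk 0
    simp only [pow_one, pow_zero] at this
    have : ‖T‖ ≤ 0 := by
      calc ‖T‖ = ‖T‖ ^ (2 ^ 0) := by norm_num
      _ ≤ c * A ^ (2 ^ 0 - 1) := hk 0
      _ = 0 := by rw [hc, hβ00]; norm_num
    rw [← hA0']
    exact this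
  · -- 0 < A
    by_contra hcon
    push_neg at hcon
    have hq1 : 1 < ‖T‖ / A := (one_lt_div hApos).mpr hcon
    obtain ⟨n, hn⟩ := pow_unbounded_of_one_lt (c / A) hq1
    have hmono : (‖T‖ / A) ^ n ≤ (‖T‖ / A) ^ (2 ^ n) :=
      pow_le_pow_right₀ hq1.le (Nat.lt_two_pow_self (n := n)).le
    have hle : (‖T‖ / A) ^ (2 ^ n) ≤ c / A := by
      rw [div_pow, div_le_div_iff₀ (pow_pos hApos _) hApos]
      calc ‖T‖ ^ (2 ^ n) * A ≤ (c * A ^ (2 ^ n - 1)) * A :=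
            mul_le_mul_of_nonneg_right (hk n) hA0
      _ = c * A ^ ((2 ^ n - 1) + 1) := by rw [pow_succ]; ring
      _ = c * A ^ (2 ^ n) := by rw [Nat.sub_add_cancel Nat.one_le_two_pow]
    exact absurd hn (not_lt.mpr (hmono.trans hle))

lemma summable_beta_sq (hβ0 : ∀ j, 0 ≤ β j) (hβs : Summable β) :
    Summable (fun j => β j ^ 2) := by
  refine Summable.of_nonneg_of_le (fun j => sq_nonneg _) (fun j => ?_) (hβs.mul_left (∑' i, β i))
  calc β j ^ 2 = β j * β j := sq _
  _ ≤ (∑' i, β i) * β j :=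
      mul_le_mul_of_nonneg_right (Summable.le_tsum hβs j (fun i _ => hβ0 i)) (hβ0 j)

/-- summability of the series applied to vectors in the range of some `Q m` -/
lemma summable_on_range (hβ0 : ∀ j, 0 ≤ β j) (hβs : Summable β)
    (hQ : ∀ j l, ‖Q j * Q l‖ ≤ (β (j - l)) ^ 2) (m : ℤ) (z : H) :
    Summable (fun j => Q j (Q m z)) := by
  refine Summable.of_norm (Summable.of_nonneg_of_le (fun j => norm_nonneg _)
    (fun j => ?_) (((Equiv.subRight m).summable_iff
      (f := fun i => β i ^ 2 * ‖z‖)).mpr ((summable_beta_sq hβ0 hβs).mul_right ‖z‖)))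
  calc ‖Q j (Q m z)‖ = ‖(Q j * Q m) z‖ := rfl
  _ ≤ ‖Q j * Q m‖ * ‖z‖ := (Q j * Q m).le_opNorm z
  _ ≤ β (j - m) ^ 2 * ‖z‖ := mul_le_mul_of_nonneg_right (hQ j m) (norm_nonneg z)

/-- the set of vectors where the sum converges, as a submodule -/
def Dom (Q : ℤ → H →L[ℂ] H) : Submodule ℂ H where
  carrier := {x | Summable fun j => Q j x}
  add_mem' := by
    intro a b ha hb
    have : (fun j => Q j (a + b)) = fun j => Q j a + Q j b := by
      funext j; exact map_add (Q j) a b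
    rw [Set.mem_setOf_eq, this]
    exact ha.add hb
  zero_mem' := by
    have : (fun j => Q j 0) = fun _ => (0 : H) := by funext j; exact map_zero (Q j)
    rw [Set.mem_setOf_eq, this]
    exact summable_zero
  smul_mem' := by
    intro c x hx
    have : (fun j => Q j (c • x)) = fun j => c • Q j x := by
      funext j; exact map_smul (Q j) c x
    rw [Set.mem_setOf_eq, this]
    exact hx.const_smul c

lemma isClosed_Dom (hβ0 : ∀ j, 0 ≤ β j) (hβs : Summable β)
    (hsa : ∀ j, IsSelfAdjoint (Q j)) (hQ : ∀ j l, ‖Q j * Q l‖ ≤ (β (j - l)) ^ 2) :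
    IsClosed ((Dom Q : Submodule ℂ H) : Set H) := by
  set A := ∑' i, β i with hA
  have hA0 : 0 ≤ A := tsum_nonneg hβ0
  refine isClosed_of_closure_subset fun x hx => ?_
  show Summable fun j => Q j x
  rw [summable_iff_vanishing_norm]
  intro ε hε
  have hden : 0 < ε / (2 * (A + 1)) := by positivity
  obtain ⟨y, hyD, hyx⟩ := Metric.mem_closure_iff.mp hx _ hden
  have hy : Summable fun j => Q j y := hyD
  obtain ⟨s, hs⟩ := summable_iff_vanishing_norm.mp hy (ε / 2) (by positivity)
  refine ⟨s, fun t ht => ?_⟩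
  have key : ∑ j ∈ t, Q j x = (∑ j ∈ t, Q j) (x - y) + ∑ j ∈ t, Q j y := by
    rw [map_sub, ContinuousLinearMap.sum_apply, ContinuousLinearMap.sum_apply,
      sub_add_cancel]
  calc ‖∑ j ∈ t, Q j x‖ ≤ ‖(∑ j ∈ t, Q j) (x - y)‖ + ‖∑ j ∈ t, Q j y‖ := by
        rw [key]; exact norm_add_le _ _
  _ < ‖∑ j ∈ t, Q j‖ * ‖x - y‖ + ε / 2 := by
        have := (∑ j ∈ t, Q j).le_opNorm (x - y)
        have h2 := hs t ht
        linarith [this]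
  _ ≤ A * (ε / (2 * (A + 1))) + ε / 2 := by
        have h1 : ‖∑ j ∈ t, Q j‖ * ‖x - y‖ ≤ A * (ε / (2 * (A + 1))) := by
          apply mul_le_mul (finite_CS hβ0 hβs hsa hQ t) _ (norm_nonneg _) hA0
          rw [← dist_eq_norm]
          exact hyx.le
        linarith
  _ ≤ ε / 2 + ε / 2 := by
        have : A * (ε / (2 * (A + 1))) ≤ (A + 1) * (ε / (2 * (A + 1))) :=
          mul_le_mul_of_nonneg_right (by linarith) hden.le
        have h2 : (A + 1) * (ε / (2 * (A + 1))) = ε / 2 := by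
          field_simp
        linarith
  _ = ε := by ring

/-- every vector is in the convergence domain -/
lemma Dom_eq_top (hβ0 : ∀ j, 0 ≤ β j) (hβs : Summable β)
    (hsa : ∀ j, IsSelfAdjoint (Q j)) (hQ : ∀ j l, ‖Q j * Q l‖ ≤ (β (j - l)) ^ 2) :
    (Dom Q : Submodule ℂ H) = ⊤ := by
  set K := (⨆ j, LinearMap.range (Q j : H →ₗ[ℂ] H)).topologicalClosure with hK
  have hKclosed : IsClosed (K : Set H) := Submodule.isClosed_topologicalClosure _
  haveI : CompleteSpace K := hKclosed.completeSpace_coe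
  have hKD : K ≤ Dom Q := by
    apply Submodule.topologicalClosure_minimal
    · refine iSup_le fun m => ?_
      rintro y ⟨z, rfl⟩
      exact summable_on_range hβ0 hβs hQ m z
    · exact isClosed_Dom hβ0 hβs hsa hQ
  have hKperpD : Kᗮ ≤ Dom Q := by
    intro x hx
    have hQx : ∀ j, Q j x = 0 := by
      intro j
      have hmem : Q j (Q j x) ∈ K := by
        apply Submodule.le_topologicalClosure
        exact le_iSup (fun j => LinearMap.range (Q j : H →ₗ[ℂ] H)) j ⟨Q j x, rfl⟩
      have h0 : inner ℂ (Q j (Q j x)) x = (0 : ℂ) :=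
        (Submodule.mem_orthogonal K x).mp hx _ hmem
      have hadj : (Q j).adjoint = Q j := (hsa j).star_eq
      have : inner ℂ (Q j x) (Q j x) = (0 : ℂ) := by
        calc inner ℂ (Q j x) (Q j x)
            = inner ℂ ((Q j).adjoint (Q j x)) x := by
              rw [ContinuousLinearMap.adjoint_inner_left]
        _ = inner ℂ (Q j (Q j x)) x := by rw [hadj]
        _ = 0 := h0
      exact inner_self_eq_zero.mp this
    show Summable fun j => Q j x
    have : (fun j => Q j x) = fun _ => (0 : H) := funext hQx
    rw [this]
    exact summable_zero
  rw [eq_top_iff, ← Submodule.sup_orthogonal_of_hasOrthogonalProjection (K := K)]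
  exact sup_le hKD hKperpD

end CSAux

/-- the Cotlar–Stein almost-orthogonality lemma, for self-adjoint operators. -/
theorem cotlar_stein {H : Type*} [NormedAddCommGroup H] [InnerProductSpace ℂ H]
    [CompleteSpace H]
    (Q : ℤ → H →L[ℂ] H) (hsa : ∀ j, IsSelfAdjoint (Q j))
    (β : ℤ → ℝ) (hβ0 : ∀ j, 0 ≤ β j) (hβs : Summable β)
    (hQ : ∀ j l, ‖Q j * Q l‖ ≤ (β (j - l)) ^ 2) :
    ∃ S : H →L[ℂ] H, (∀ x : H, HasSum (fun j => Q j x) (S x)) ∧ ‖S‖ ≤ ∑' j, β j := by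
  have hA0 : 0 ≤ ∑' j, β j := tsum_nonneg hβ0
  have hsum : ∀ x : H, Summable fun j => Q j x := by
    intro x
    have h := CSAux.Dom_eq_top (Q := Q) hβ0 hβs hsa hQ
    have : x ∈ (CSAux.Dom Q : Submodule ℂ H) := by rw [h]; trivial
    exact this
  have hb : ∀ x : H, ‖∑' j, Q j x‖ ≤ (∑' j, β j) * ‖x‖ := by
    intro x
    have ht : Filter.Tendsto (fun s : Finset ℤ => ‖∑ j ∈ s, Q j x‖) Filter.atTop
        (nhds ‖∑' j, Q j x‖) := (hsum x).hasSum.norm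
    refine le_of_tendsto' ht fun s => ?_
    calc ‖∑ j ∈ s, Q j x‖ = ‖(∑ j ∈ s, Q j) x‖ := by
          rw [ContinuousLinearMap.sum_apply]
    _ ≤ ‖∑ j ∈ s, Q j‖ * ‖x‖ := (∑ j ∈ s, Q j).le_opNorm x
    _ ≤ (∑' j, β j) * ‖x‖ :=
          mul_le_mul_of_nonneg_right (CSAux.finite_CS hβ0 hβs hsa hQ s) (norm_nonneg x)
  set g : H →ₗ[ℂ] H :=
    { toFun := fun x => ∑' j, Q j x
      map_add' := by
        intro x y
        have h1 : (fun j => Q j (x + y)) = fun j => Q j x + Q j y := by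
          funext j; exact map_add (Q j) x y
        show ∑' j, Q j (x + y) = (∑' j, Q j x) + ∑' j, Q j y
        rw [h1, Summable.tsum_add (hsum x) (hsum y)]
      map_smul' := by
        intro c x
        have h1 : (fun j => Q j (c • x)) = fun j => c • Q j x := by
          funext j; exact map_smul (Q j) c x
        show ∑' j, Q j (c • x) = c • ∑' j, Q j x
        rw [h1, Summable.tsum_const_smul c (hsum x)] } with hg
  refine ⟨LinearMap.mkContinuous g (∑' j, β j) (fun x => hb x), fun x => ?_, ?_⟩
  · exact (hsum x).hasSum
  · exact LinearMap.mkContinuous_norm_le g hA0 _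
end
end

section
/- Let G be a compact Lie group with Haar measure, and let the scattering transform on L²(G) at maximal scale 2^L = 1 be defined by S̃₀[p̃]f = |G|^{-1} ∫_G U[p̃]f(g) dg, where U[p̃] cascades wavelet-modulus operators built from left convolutions on G. Then S̃₀ is invariant under the left action of G: for every f ∈ L²(G), every g ∈ G, and every finite path p̃, S̃₀[p̃](L_g f) = S̃₀[p̃]f, where L_g f(r) = f(g^{-1}r). -/
open MeasureTheory Filter
open scoped Topology

noncomputable section

/-- Left convolution on a group G: (f ⋆ h)(r) = ∫_G f(g) h(g⁻¹ r) dμ(g). -/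
def convG {G : Type*} [Group G] [MeasurableSpace G] (μ : Measure G)
    (f h : G → ℂ) (r : G) : ℂ :=
  ∫ g, f g * h (g⁻¹ * r) ∂μ

/-- The scattering propagator on L²(G): U[p̃]f cascades wavelet-modulus operators
Ũ[λ̃]f = |f ⋆ ψ̃_{λ̃}| along the path p̃. -/
def scatterG {G : Type*} [Group G] [MeasurableSpace G] (μ : Measure G)
    {Λ : Type*} (ψ : Λ → G → ℂ) : List Λ → (G → ℂ) → (G → ℂ)
  | [], f => f
  | lam :: p, f => scatterG μ ψ p (fun r => ((‖convG μ f (ψ lam) r‖ : ℝ) : ℂ))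


theorem convG_left {G : Type*} [Group G] [TopologicalSpace G]
    [IsTopologicalGroup G] [MeasurableSpace G] [BorelSpace G]
    (μ : Measure G) [μ.IsMulLeftInvariant]
    (f h : G → ℂ) (g r : G) :
    convG μ (fun x => f (g⁻¹ * x)) h r = convG μ f h (g⁻¹ * r) := by
  unfold convG
  rw [← MeasureTheory.integral_mul_left_eq_self (fun x => f (g⁻¹ * x) * h (x⁻¹ * r)) g]
  simp [mul_assoc]

theorem scatterG_left {G : Type*} [Group G] [TopologicalSpace G]
    [IsTopologicalGroup G] [MeasurableSpace G] [BorelSpace G]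
    (μ : Measure G) [μ.IsMulLeftInvariant]
    {Λ : Type*} (ψ : Λ → G → ℂ) (p : List Λ) (f : G → ℂ) (g : G) :
    scatterG μ ψ p (fun x => f (g⁻¹ * x)) = fun r => scatterG μ ψ p f (g⁻¹ * r) := by
  induction p generalizing f with
  | nil => rfl
  | cons lam p ih =>
      show scatterG μ ψ p _ = _
      have : (fun r => ((‖convG μ (fun x => f (g⁻¹ * x)) (ψ lam) r‖ : ℝ) : ℂ))
          = fun r => ((‖convG μ f (ψ lam) (g⁻¹ * r)‖ : ℝ) : ℂ) := by
        funext r; rw [convG_left]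
      rw [this]
      exact ih (fun r => ((‖convG μ f (ψ lam) r‖ : ℝ) : ℂ))

/-- on a compact group G with Haar measure, the scattering transform at maximal
scale S̃₀[p̃]f = |G|⁻¹ ∫_G U[p̃]f dμ is invariant under the left action L_g f(r) = f(g⁻¹ r). -/
theorem group_scattering_invariant {G : Type*} [Group G] [TopologicalSpace G]
    [IsTopologicalGroup G] [CompactSpace G] [MeasurableSpace G] [BorelSpace G]
    (μ : Measure G) [μ.IsHaarMeasure]
    {Λ : Type*} (ψ : Λ → G → ℂ) (hψ : ∀ lam, MemLp (ψ lam) 2 μ) :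
    ∀ f : G → ℂ, MemLp f 2 μ → ∀ g : G, ∀ p : List Λ,
      (μ Set.univ).toReal⁻¹ •
          (∫ r, scatterG μ ψ p (fun x => f (g⁻¹ * x)) r ∂μ) =
        (μ Set.univ).toReal⁻¹ • ∫ r, scatterG μ ψ p f r ∂μ := by
  intro f _ g p
  congr 1
  rw [scatterG_left]
  exact MeasureTheory.integral_mul_left_eq_self (fun r => scatterG μ ψ p f r) g⁻¹
end
end
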